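/- Let h : [0,1] → [0,1] be the binary entropy function h(δ) = −δ lg δ − (1−δ) lg(1−δ), with left inverse h⁻¹ : [0,1] → [0,1/2]. Then for all δ with 0 < δ < 1/6, h⁻¹(δ) ≥ δ/(2 lg(6/δ)). -/

import Mathlib

/-- The binary entropy function `h(x) = -x lg x - (1-x) lg (1-x)` (base-2 logarithms). -/
noncomputable def binEnt (x : ℝ) : ℝ := -x * Real.logb 2 x - (1 - x) * Real.logb 2 (1 - x)

lemma log_le_div_e {t : ℝ} (ht : 0 < t) : Real.log t ≤ t / Real.exp 1 := by
  have h := Real.log_le_sub_one_of_pos (x := t / Real.exp 1) (by positivity)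
  rw [Real.log_div ht.ne' (Real.exp_pos 1).ne', Real.log_exp] at h
  linarith

/-- for `0 < δ < 1/6`, the left inverse of the binary entropy function satisfies
`h⁻¹(δ) ≥ δ / (2 lg (6/δ))`; i.e. if `α ∈ [0, 1/2]` satisfies `h(α) = δ` then
`α ≥ δ / (2 lg (6/δ))`. -/
theorem stmt8 (δ α : ℝ) (hδ0 : 0 < δ) (hδ : δ < 1 / 6)
    (hα : α ∈ Set.Icc (0 : ℝ) (1 / 2)) (hinv : binEnt α = δ) :
    δ / (2 * Real.logb 2 (6 / δ)) ≤ α := by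
  have hlog2 : (0:ℝ) < Real.log 2 := Real.log_pos one_lt_two
  have hlog2' : (1:ℝ)/3 < Real.log 2 := by
    have := Real.log_two_gt_d9; linarith
  have he2 : (2:ℝ) ≤ Real.exp 1 := by have := Real.add_one_le_exp 1; linarith
  have h6δ : (36:ℝ) < 6 / δ := by
    rw [lt_div_iff₀ hδ0]; linarith
  have h6δpos : (0:ℝ) < 6 / δ := by linarith
  set L := Real.logb 2 (6 / δ) with hLdef
  have hL1 : (1:ℝ) ≤ L := by
    rw [hLdef, show (1:ℝ) = Real.logb 2 2 by simp]
    exact Real.logb_le_logb_of_le one_lt_two (by norm_num) (by linarith)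
  have hLpos : (0:ℝ) < L := by linarith
  set β := δ / (2 * L) with hβdef
  have hβpos : 0 < β := by positivity
  have hβhalf : β ≤ 1/2 := by
    rw [hβdef, div_le_iff₀ (by positivity)]
    nlinarith
  have h1β : (0:ℝ) < 1 - β := by linarith
  have hδβ : δ = 2 * L * β := by
    rw [hβdef]; field_simp [hLpos.ne']
  have hlogL : Real.log (6/δ) = L * Real.log 2 := by
    rw [hLdef, Real.logb]
    field_simp
  have key : Real.binEntropy β ≤ δ * Real.log 2 := by
    have h1 : (1 - β) * Real.log (1 - β)⁻¹ ≤ β := by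
      have hl := Real.log_le_sub_one_of_pos (x := (1 - β)⁻¹) (by positivity)
      calc (1 - β) * Real.log (1 - β)⁻¹ ≤ (1 - β) * ((1 - β)⁻¹ - 1) :=
            mul_le_mul_of_nonneg_left hl h1β.le
        _ = β := by field_simp; ring
    have h2 : Real.log β⁻¹ + 1 ≤ 2 * L * Real.log 2 := by
      have hβinv : β⁻¹ = 2 * L / δ := by rw [hβdef]; field_simp
      have h2L : 2 * L * Real.log 2 = Real.log ((6/δ)^2) := by
        rw [Real.log_pow]; push_cast; linarith [hlogL]
      have hkey : 2 * L / δ * Real.exp 1 ≤ (6/δ)^2 := by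
        have hlogle : Real.log (6/δ) ≤ (6/δ) / Real.exp 1 := log_le_div_e h6δpos
        -- L * log 2 ≤ (6/δ)/exp 1, so L * log2 * exp1 ≤ 6/δ
        have hA : L * Real.log 2 * Real.exp 1 ≤ 6/δ := by
          rw [hlogL] at hlogle
          rw [← le_div_iff₀ (Real.exp_pos 1)]
          exact hlogle
        -- goal: 2L/δ * e ≤ 36/δ²  ⇔  2 L e δ ≤ 36  (times δ²)... work with u = 6/δ
        have hC : L * Real.log 2 * Real.exp 1 * δ ≤ 6 := by
          have := mul_le_mul_of_nonneg_right hA hδ0.le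
          rwa [div_mul_cancel₀ _ hδ0.ne'] at this
        have hD : L * Real.exp 1 * δ ≤ 18 := by
          nlinarith [mul_pos (mul_pos hLpos (Real.exp_pos 1)) hδ0]
        have hsq : (6/δ)^2 = 36/δ^2 := by rw [div_pow]; norm_num
        rw [hsq, div_mul_eq_mul_div, div_le_div_iff₀ hδ0 (by positivity)]
        nlinarith [hD, hδ0]
      calc Real.log β⁻¹ + 1 = Real.log (2*L/δ * Real.exp 1) := by
            rw [hβinv, Real.log_mul (by positivity) (Real.exp_pos 1).ne', Real.log_exp]
        _ ≤ Real.log ((6/δ)^2) := Real.log_le_log (by positivity) hkey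
        _ = 2 * L * Real.log 2 := h2L.symm
    calc Real.binEntropy β = β * Real.log β⁻¹ + (1 - β) * Real.log (1 - β)⁻¹ := rfl
      _ ≤ β * Real.log β⁻¹ + β := by linarith
      _ = β * (Real.log β⁻¹ + 1) := by ring
      _ ≤ β * (2 * L * Real.log 2) := mul_le_mul_of_nonneg_left h2 hβpos.le
      _ = δ * Real.log 2 := by rw [hδβ]; ring
  have hαent : Real.binEntropy α = δ * Real.log 2 := by
    have heq : binEnt α * Real.log 2 = Real.binEntropy α := by
      simp only [binEnt, Real.binEntropy, Real.logb, Real.log_inv]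
      field_simp
      ring
    rw [← heq, hinv]
  have hβmem : β ∈ Set.Icc (0:ℝ) 2⁻¹ := ⟨hβpos.le, by norm_num; linarith⟩
  have hαmem : α ∈ Set.Icc (0:ℝ) 2⁻¹ := by
    obtain ⟨ha1, ha2⟩ := hα; exact ⟨ha1, by norm_num; linarith⟩
  have hfin : β ≤ α := by
    by_contra hc
    push_neg at hc
    have := Real.binEntropy_strictMonoOn hαmem hβmem hc
    rw [hαent] at this
    linarith [key]
  exact hfin
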